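/- Let K be a group that is nilpotent of class at most 2, and let x_1, …, x_n ∈ K be elements such that K is generated by {x_1, …, x_n} together with its center Z(K). For each i let m_i denote the order of x_i·Z(K) in K/Z(K). Let g = x_1^{a_1} x_2^{a_2} ⋯ x_n^{a_n} for integers a_1, …, a_n, and assume that for each i and each j ≠ i there exists an integer b with b ≡ a_i (mod m_i) and gcd(m_i, m_j) ∣ b. Then g ∈ Z(K). -/

import Mathlib

open scoped commutatorElement

/-- In a group `K` of nilpotency class at most `2`, generated by `x_1, …, x_n`
together with its center, an element `g = x_1^{a_1} ⋯ x_n^{a_n}` is central provided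
that for each `i` and each `j ≠ i` there is an integer `b` with
`b ≡ a_i (mod m_i)` and `gcd(m_i, m_j) ∣ b`, where `m_i` is the order of `x_i Z(K)`
in `K/Z(K)`. -/
theorem mem_center_of_congruences
    (K : Type*) [Group K]
    (hnil : (⊤ : Subgroup K).lowerCentralSeries 2 = ⊥)
    (n : ℕ) (x : Fin n → K)
    (hgen : Subgroup.closure (Set.range x ∪ (Subgroup.center K : Set K)) = ⊤)
    (m : Fin n → ℕ)
    (hm : ∀ i, m i = orderOf (QuotientGroup.mk (x i) : K ⧸ Subgroup.center K))
    (a : Fin n → ℤ)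
    (hab : ∀ i j : Fin n, j ≠ i →
      ∃ b : ℤ, Int.ModEq (m i : ℤ) b (a i) ∧ ((Nat.gcd (m i) (m j) : ℤ)) ∣ b) :
    (((List.finRange n).map fun i => x i ^ a i).prod) ∈ Subgroup.center K := by
  -- In a class ≤ 2 group, all commutators are central.
  have hc : ∀ p q : K, ⁅p, q⁆ ∈ Subgroup.center K := by
    intro p q
    rw [Subgroup.mem_center_iff]
    intro r
    have h0 : ⁅p, q⁆ ∈ (⊤ : Subgroup K).lowerCentralSeries 1 := by
      rw [Subgroup.lowerCentralSeries_succ]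
      exact Subgroup.commutator_mem_commutator (Subgroup.mem_top p) (Subgroup.mem_top q)
    have h1 : ⁅⁅p, q⁆, r⁆ ∈ (⊤ : Subgroup K).lowerCentralSeries 2 := by
      rw [show (2 : ℕ) = 1 + 1 from rfl, Subgroup.lowerCentralSeries_succ]
      exact Subgroup.commutator_mem_commutator h0 (Subgroup.mem_top r)
    rw [hnil, Subgroup.mem_bot, commutatorElement_eq_one_iff_mul_comm] at h1
    exact h1.symm
  -- conjugation formula
  have hconj : ∀ p q : K, ∀ k : ℕ, p ^ k * q * (p ^ k)⁻¹ = ⁅p, q⁆ ^ k * q := by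
    intro p q k
    induction k with
    | zero => simp
    | succ k ih =>
      have hstep : p * q * p⁻¹ = ⁅p, q⁆ * q := by
        simp [commutatorElement_def]
      have hck : p * ⁅p, q⁆ ^ k = ⁅p, q⁆ ^ k * p :=
        Subgroup.mem_center_iff.mp ((Subgroup.center K).pow_mem (hc p q) k) p
      calc p ^ (k + 1) * q * (p ^ (k + 1))⁻¹
          = p * (p ^ k * q * (p ^ k)⁻¹) * p⁻¹ := by rw [pow_succ']; group
        _ = p * (⁅p, q⁆ ^ k * q) * p⁻¹ := by rw [ih]
        _ = (p * ⁅p, q⁆ ^ k) * q * p⁻¹ := by group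
        _ = (⁅p, q⁆ ^ k * p) * q * p⁻¹ := by rw [hck]
        _ = ⁅p, q⁆ ^ k * (p * q * p⁻¹) := by group
        _ = ⁅p, q⁆ ^ (k + 1) * q := by rw [hstep, pow_succ]; group
  -- commutator power formula (ℕ)
  have hnat : ∀ p q : K, ∀ k : ℕ, ⁅p ^ k, q⁆ = ⁅p, q⁆ ^ k := by
    intro p q k
    have := hconj p q k
    rw [commutatorElement_def]
    calc p ^ k * q * (p ^ k)⁻¹ * q⁻¹ = ⁅p, q⁆ ^ k * q * q⁻¹ := by rw [this]
      _ = ⁅p, q⁆ ^ k := by group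
  -- inverse formula
  have hinv : ∀ p q : K, ⁅p⁻¹, q⁆ = ⁅p, q⁆⁻¹ := by
    intro p q
    have h1 : ⁅p⁻¹, q⁆ = p⁻¹ * ⁅q, p⁆ * p := by
      simp [commutatorElement_def]; group
    have h2 : p⁻¹ * ⁅q, p⁆ = ⁅q, p⁆ * p⁻¹ :=
      Subgroup.mem_center_iff.mp (hc q p) p⁻¹
    rw [h1, h2, mul_assoc, inv_mul_cancel, mul_one, ← commutatorElement_inv]
  -- commutator power formula (ℤ)
  have hz : ∀ p q : K, ∀ z : ℤ, ⁅p ^ z, q⁆ = ⁅p, q⁆ ^ z := by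
    intro p q z
    cases z with
    | ofNat k => simpa using hnat p q k
    | negSucc k =>
      rw [zpow_negSucc, zpow_negSucc, hinv, hnat]
  -- x i ^ m i is central
  have hmi : ∀ i, (x i) ^ (m i) ∈ Subgroup.center K := by
    intro i
    have h := pow_orderOf_eq_one (QuotientGroup.mk (x i) : K ⧸ Subgroup.center K)
    rw [← QuotientGroup.mk_pow, QuotientGroup.eq_one_iff] at h
    rw [hm i]
    exact h
  -- order of ⁅x i, x j⁆ divides m i and m j
  have hdvd : ∀ i j, orderOf ⁅x i, x j⁆ ∣ m i ∧ orderOf ⁅x i, x j⁆ ∣ m j := by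
    intro i j
    have d1 : ∀ i j, orderOf ⁅x i, x j⁆ ∣ m i := by
      intro i j
      apply orderOf_dvd_of_pow_eq_one
      rw [← hnat]
      exact commutatorElement_eq_one_iff_mul_comm.mpr
        (Subgroup.mem_center_iff.mp (hmi i) (x j)).symm
    refine ⟨d1 i j, ?_⟩
    have := d1 j i
    rwa [← commutatorElement_inv, orderOf_inv] at this
  -- each factor commutes with each generator
  have hcomm : ∀ i j : Fin n, Commute (x i ^ a i) (x j) := by
    intro i j
    by_cases hij : j = i
    · subst hij; exact (Commute.refl (x j)).zpow_left _
    · obtain ⟨b, hb1, hb2⟩ := hab i j hij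
      have hdi := (hdvd i j).1
      have hdj := (hdvd i j).2
      have hgd : (orderOf ⁅x i, x j⁆ : ℤ) ∣ b :=
        dvd_trans (Int.natCast_dvd_natCast.mpr (Nat.dvd_gcd hdi hdj)) hb2
      have hab' : (orderOf ⁅x i, x j⁆ : ℤ) ∣ (a i - b) :=
        dvd_trans (Int.natCast_dvd_natCast.mpr hdi) hb1.dvd
      have hai : (orderOf ⁅x i, x j⁆ : ℤ) ∣ a i := by
        have := dvd_add hgd hab'
        simpa using this
      have : ⁅x i, x j⁆ ^ (a i) = 1 := orderOf_dvd_iff_zpow_eq_one.mp hai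
      rw [← commutatorElement_eq_one_iff_commute, hz]
      exact this
  -- the product commutes with everything
  set g := (((List.finRange n).map fun i => x i ^ a i).prod) with hg
  rw [Subgroup.mem_center_iff]
  intro r
  have hr : r ∈ Subgroup.closure (Set.range x ∪ (Subgroup.center K : Set K)) := by
    rw [hgen]; trivial
  have : Commute r g := by
    induction hr using Subgroup.closure_induction with
    | mem s hs =>
      rcases hs with ⟨j, rfl⟩ | hs
      · apply Commute.symm
        apply Commute.list_prod_left
        intro y hy
        simp only [List.mem_map, List.mem_finRange] at hy
        obtain ⟨i, _, rfl⟩ := hy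
        exact hcomm i j
      · exact (Subgroup.mem_center_iff.mp hs g).symm
    | one => exact Commute.one_left g
    | mul s t _ _ hs ht => exact hs.mul_left ht
    | inv s _ hs => exact hs.inv_left
  exact this
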